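/- Let A be a finite group with subgroups U and G such that P_A(U) = P_A(G), where |A : G| = n ≥ 2 and Core_A(G) = N ≠ 1. Suppose f is an increasing integer function such that for every finite group B with normal subgroup M of index m and subgroup V ≤ M with P_B(V) = P_B(M) we have |M : V| ≤ f(m). Then |A : U| ≤ n! · f(n!). -/

import Mathlib

/-- The `A`-prime-power-covering set of a subgroup `U` of `A`. -/
def ppcSet {A : Type*} [Group A] (U : Subgroup A) : Set A :=
  {y | ∃ x ∈ U, (∃ p k : ℕ, p.Prime ∧ orderOf x = p ^ k) ∧ ∃ a : A, a⁻¹ * x * a = y}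

lemma ppcSet_map {A B : Type*} [Group A] [Group B] (e : A ≃* B) (U : Subgroup A) :
    ppcSet (U.map e.toMonoidHom) = e '' ppcSet U := by
  ext y
  constructor
  · rintro ⟨x, ⟨x₀, hx₀, rfl⟩, hpp, a, rfl⟩
    refine ⟨(e.symm a)⁻¹ * x₀ * e.symm a, ⟨x₀, hx₀, ?_, e.symm a, rfl⟩, by simp⟩
    rwa [orderOf_injective e.toMonoidHom e.injective] at hpp
  · rintro ⟨y₀, ⟨x, hx, hpp, a, rfl⟩, rfl⟩
    refine ⟨e x, ⟨x, hx, rfl⟩, ?_, e a, by simp⟩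
    rwa [show orderOf (e x) = orderOf x from orderOf_injective e.toMonoidHom e.injective x]

lemma index_normalCore_dvd {A : Type*} [Group A] [Finite A] (G : Subgroup A) :
    G.normalCore.index ∣ Nat.factorial G.index := by
  classical
  have := Fintype.ofFinite A
  rw [Subgroup.normalCore_eq_ker, Subgroup.index_ker]
  have h1 : Nat.card (MulAction.toPermHom A (A ⧸ G)).range ∣
      Nat.card (Equiv.Perm (A ⧸ G)) := Subgroup.card_subgroup_dvd_card _
  have h2 : Nat.card (Equiv.Perm (A ⧸ G)) = Nat.factorial G.index := by
    rw [Nat.card_eq_fintype_card, Fintype.card_perm, ← Nat.card_eq_fintype_card]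
    rfl
  rwa [h2] at h1

lemma key {A : Type} [Group A] [Finite A] (U G : Subgroup A) (n : ℕ)
    (h : ppcSet U = ppcSet G) (hn : G.index = n)
    (f : ℕ → ℕ) (hf : Monotone f)
    (hconj : ∀ (B : Type) (_ : Group B) (_ : Finite B) (M V : Subgroup B),
      M.Normal → V ≤ M → ppcSet V = ppcSet M → V.relIndex M ≤ f M.index) :
    U.index ≤ Nat.factorial n * f (Nat.factorial n) := by
  set N := G.normalCore with hN
  have hdvd : N.index ∣ Nat.factorial n := hn ▸ index_normalCore_dvd G
  have hNle : N.index ≤ Nat.factorial n :=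
    Nat.le_of_dvd (Nat.factorial_pos n) hdvd
  have hsub : ppcSet (U ⊓ N) = ppcSet N := by
    ext y
    constructor
    · rintro ⟨x, hx, hpp, a, rfl⟩
      exact ⟨a⁻¹ * x * a, G.normalCore_normal.conj_mem' x hx.2 a,
        by rwa [show orderOf (a⁻¹ * x * a) = orderOf x by
          have := orderOf_injective (MulAut.conj a⁻¹).toMonoidHom
            (MulAut.conj a⁻¹).injective x
          simpa [MulAut.conj, mul_assoc] using this], 1, by group⟩
    · rintro ⟨x, hx, hpp, a, rfl⟩
      have hxG : x ∈ ppcSet G := ⟨x, G.normalCore_le hx, hpp, 1, by group⟩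
      rw [← h] at hxG
      obtain ⟨u, hu, hpp', b, hb⟩ := hxG
      have huN : u ∈ N := by
        have : b * x * b⁻¹ ∈ N := by
          simpa [mul_assoc] using G.normalCore_normal.conj_mem x hx b
        rwa [← hb, show b * (b⁻¹ * u * b) * b⁻¹ = u by group] at this
      exact ⟨u, ⟨hu, huN⟩, hpp', b * a, by rw [← hb]; group⟩
  have hrel : (U ⊓ N).relIndex N ≤ f N.index :=
    hconj A inferInstance inferInstance N (U ⊓ N) G.normalCore_normal inf_le_right hsub
  have h1 : U.index ∣ (U ⊓ N).index := Subgroup.index_dvd_of_le inf_le_left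
  have h2 : (U ⊓ N).relIndex N * N.index = (U ⊓ N).index :=
    Subgroup.relIndex_mul_index inf_le_right
  have hfin : (U ⊓ N).index ≠ 0 := Subgroup.index_ne_zero_of_finite
  calc U.index ≤ (U ⊓ N).index := Nat.le_of_dvd (Nat.pos_of_ne_zero hfin) h1
    _ = (U ⊓ N).relIndex N * N.index := h2.symm
    _ ≤ f N.index * Nat.factorial n := Nat.mul_le_mul hrel hNle
    _ ≤ f (Nat.factorial n) * Nat.factorial n := Nat.mul_le_mul_right _ (hf hNle)
    _ = Nat.factorial n * f (Nat.factorial n) := Nat.mul_comm _ _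

theorem stmt2 {A : Type*} [Group A] [Finite A] (U G : Subgroup A) (n : ℕ)
    (h : ppcSet U = ppcSet G) (hn : G.index = n) (hn2 : 2 ≤ n)
    (hcore : G.normalCore ≠ ⊥)
    (f : ℕ → ℕ) (hf : Monotone f)
    (hconj : ∀ (B : Type) (_ : Group B) (_ : Finite B) (M V : Subgroup B),
      M.Normal → V ≤ M → ppcSet V = ppcSet M → V.relIndex M ≤ f M.index) :
    U.index ≤ Nat.factorial n * f (Nat.factorial n) := by
  classical
  haveI : Finite (Shrink.{0} A) := Finite.of_equiv A (equivShrink.{0} A)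
  let e : A ≃* Shrink.{0} A := Shrink.mulEquiv.symm
  have hkbot : e.toMonoidHom.ker = ⊥ :=
    (MonoidHom.ker_eq_bot_iff e.toMonoidHom).mpr e.injective
  have hker : e.toMonoidHom.ker ≤ U := by rw [hkbot]; exact bot_le
  have hkerG : e.toMonoidHom.ker ≤ G := by rw [hkbot]; exact bot_le
  have hmap : ppcSet (U.map e.toMonoidHom) = ppcSet (G.map e.toMonoidHom) := by
    rw [ppcSet_map, ppcSet_map, h]
  have hGn : (G.map e.toMonoidHom).index = n := by
    rw [Subgroup.index_map_eq _ e.surjective hkerG, hn]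
  have hkey := key (U.map e.toMonoidHom) (G.map e.toMonoidHom) n hmap hGn f hf hconj
  rwa [Subgroup.index_map_eq _ e.surjective hker] at hkey
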